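/- Let 1 ≤ i ≤ s, write ξ_i = (k,t), and let p > k be such that the elements of M in column t are exactly {(j,t) : p ≤ j ≤ n}. There is no configuration a > b > c with k < a < p, (a,b) ∈ B_i (so (a,b) ∈ B_i^{(2)}, i.e. t < b < k), and (b,c) ∈ B_i^{(1.1)} (i.e. (b,c) ∈ B_i with 1 < b < k, t < c < k, and both (b,t) and (k,c) in B_{i−1}). -/

import Mathlib

open Finset MvPolynomial

namespace Panov

/-- The set `A` of places `(i,j)` with `n ≥ i > j ≥ 1`. -/
def placesA (n : ℕ) : Finset (ℕ × ℕ) :=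
  (Finset.range (n + 1) ×ˢ Finset.range (n + 1)).filter fun p => 1 ≤ p.2 ∧ p.2 < p.1

/-- The rank of a place in the linear order `≻`:
`η ≻ ζ` iff `ordA n η < ordA n ζ`. -/
def ordA (n : ℕ) (p : ℕ × ℕ) : ℕ := p.2 * (n + 1) + (n - p.1)

/-- The `≻`-greatest element of a (nonempty) set `B` of places:
the element with the minimal value of `ordA`. -/
def xiOf (n : ℕ) (B : Finset (ℕ × ℕ)) : ℕ × ℕ :=
  let m := WithTop.untopD 0 ((B.image (ordA n)).min)
  (n - m % (n + 1), m / (n + 1))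

/-- The places that get the symbol `−` at the current step, when the
current set of unfilled places is `B`. -/
def minusSet (n : ℕ) (B : Finset (ℕ × ℕ)) : Finset (ℕ × ℕ) :=
  B.filter fun p =>
    p.1 = (xiOf n B).1 ∧ (xiOf n B).2 < p.2 ∧ p.2 < (xiOf n B).1 ∧ (p.2, (xiOf n B).2) ∈ B

/-- The places that get the symbol `+` at the current step. -/
def plusSet (n : ℕ) (B : Finset (ℕ × ℕ)) : Finset (ℕ × ℕ) :=
  B.filter fun p =>
    p.2 = (xiOf n B).2 ∧ (xiOf n B).2 < p.1 ∧ p.1 < (xiOf n B).1 ∧ ((xiOf n B).1, p.1) ∈ B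

/-- `Bset n M i` is the set of places unfilled after step `i` of the diagram. -/
def Bset (n : ℕ) (M : Finset (ℕ × ℕ)) : ℕ → Finset (ℕ × ℕ)
  | 0 => placesA n \ M
  | i + 1 =>
      Bset n M i \
        insert (xiOf n (Bset n M i)) (minusSet n (Bset n M i) ∪ plusSet n (Bset n M i))

/-- `ξ_i`, the place that receives `⊗` at step `i ≥ 1`. -/
def xiStep (n : ℕ) (M : Finset (ℕ × ℕ)) (i : ℕ) : ℕ × ℕ := xiOf n (Bset n M (i - 1))

/-- `C_i⁻`, the places filled with `−` at step `i ≥ 1`. -/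
def Cminus (n : ℕ) (M : Finset (ℕ × ℕ)) (i : ℕ) : Finset (ℕ × ℕ) :=
  minusSet n (Bset n M (i - 1))

/-- `C_i⁺`, the places filled with `+` at step `i ≥ 1`. -/
def Cplus (n : ℕ) (M : Finset (ℕ × ℕ)) (i : ℕ) : Finset (ℕ × ℕ) :=
  plusSet n (Bset n M (i - 1))

/-- `M ⊆ A` spans an ideal `𝔪` of `𝔫 = ut(n,K)`. -/
def IsIdealSet (n : ℕ) (M : Finset (ℕ × ℕ)) : Prop :=
  M ⊆ placesA n ∧
    (∀ p ∈ M, ∀ d, 1 ≤ d → d < p.2 → (p.1, d) ∈ M) ∧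
    (∀ p ∈ M, ∀ c, p.1 < c → c ≤ n → (c, p.2) ∈ M)

/-- `s` is the number of steps after which the diagram is complete. -/
def IsNumSteps (n : ℕ) (M : Finset (ℕ × ℕ)) (s : ℕ) : Prop :=
  Bset n M s = ∅ ∧ ∀ j < s, (Bset n M j).Nonempty



/-- `(a,b) ∈ B_i^{(1.1)}` (relative to `ξ_i = (k,t)`):  `(a,b) ∈ B_i`,
`1 < a < k`, `t < b < k`, and both `(a,t)` and `(k,b)` lie in `B_{i−1}`. -/
def memB11 (n : ℕ) (M : Finset (ℕ × ℕ)) (i k t : ℕ) (q : ℕ × ℕ) : Prop :=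
  q ∈ Bset n M i ∧ 1 < q.1 ∧ q.1 < k ∧ t < q.2 ∧ q.2 < k ∧
    (q.1, t) ∈ Bset n M (i - 1) ∧ (k, q.2) ∈ Bset n M (i - 1)

/-- `(a,b) ∈ B_i^{(1.2)}` of type (c) (relative to `ξ_i = (k,t)`):
`(a,b) ∈ B_i`, `1 < a < k`, `t < b < k`, and `(a,t) ∉ B_{i−1}` or
`(k,b) ∉ B_{i−1}`. -/
def memB12c (n : ℕ) (M : Finset (ℕ × ℕ)) (i k t : ℕ) (q : ℕ × ℕ) : Prop :=
  q ∈ Bset n M i ∧ 1 < q.1 ∧ q.1 < k ∧ t < q.2 ∧ q.2 < k ∧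
    ((q.1, t) ∉ Bset n M (i - 1) ∨ (k, q.2) ∉ Bset n M (i - 1))



lemma mem_placesA {n : ℕ} {q : ℕ × ℕ} : q ∈ placesA n ↔ q.1 ≤ n ∧ 1 ≤ q.2 ∧ q.2 < q.1 := by
  simp only [placesA, Finset.mem_filter, Finset.mem_product, Finset.mem_range]
  omega

lemma ordA_recover {n : ℕ} {q : ℕ × ℕ} (h1 : q.1 ≤ n) :
    (n - (ordA n q) % (n + 1), (ordA n q) / (n + 1)) = q := by
  have h2 : (ordA n q) % (n+1) = n - q.1 := by
    unfold ordA
    rw [Nat.mul_comm, Nat.mul_add_mod, Nat.mod_eq_of_lt (by omega)]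
  have h3 : (ordA n q) / (n+1) = q.2 := by
    unfold ordA
    rw [Nat.mul_comm, Nat.mul_add_div (by omega), Nat.div_eq_of_lt (by omega), Nat.add_zero]
  rw [h2, h3]
  ext
  · simp; omega
  · simp

lemma xiOf_spec {n : ℕ} {B : Finset (ℕ × ℕ)} (hB : B ⊆ placesA n) {q : ℕ × ℕ}
    (hq : q ∈ B) : xiOf n B ∈ B ∧ ∀ r ∈ B, ordA n (xiOf n B) ≤ ordA n r := by
  obtain ⟨m, hm⟩ := Finset.min_of_nonempty (Finset.Nonempty.image ⟨q, hq⟩ (ordA n))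
  have hmmem : m ∈ B.image (ordA n) := Finset.mem_of_min hm
  obtain ⟨q0, hq0, hq0m⟩ := Finset.mem_image.1 hmmem
  have hxi : xiOf n B = q0 := by
    unfold xiOf
    simp only [hm, WithTop.untopD_coe, ← hq0m]
    exact ordA_recover (mem_placesA.1 (hB hq0)).1
  refine ⟨hxi ▸ hq0, fun r hr => ?_⟩
  rw [hxi, hq0m]
  exact Finset.min_le_of_eq (Finset.mem_image_of_mem _ hr) hm

lemma Bset_subset (n : ℕ) (M : Finset (ℕ × ℕ)) : ∀ j, Bset n M j ⊆ placesA n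
  | 0 => Finset.sdiff_subset
  | j + 1 => Finset.Subset.trans Finset.sdiff_subset (Bset_subset n M j)

lemma Bset_succ_subset (n : ℕ) (M : Finset (ℕ × ℕ)) (j : ℕ) :
    Bset n M (j + 1) ⊆ Bset n M j := Finset.sdiff_subset

lemma Bset_notMem (n : ℕ) (M : Finset (ℕ × ℕ)) : ∀ j, ∀ {q : ℕ × ℕ}, q ∈ Bset n M j → q ∉ M
  | 0, q, hq => (Finset.mem_sdiff.1 hq).2
  | j + 1, q, hq => Bset_notMem n M j (Bset_succ_subset n M j hq)

/-- Key invariant: there is never a triple `x > y > z` with `(x,z)` already filled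
(not in `B_j` and not in `M`) while `(x,y)` and `(y,z)` are still unfilled. -/
lemma no_triangle (n : ℕ) (M : Finset (ℕ × ℕ)) (hM : IsIdealSet n M) :
    ∀ j : ℕ, ∀ x y z : ℕ, y < x → z < y →
      (x, z) ∉ Bset n M j → (x, z) ∉ M →
      (x, y) ∈ Bset n M j → (y, z) ∈ Bset n M j → False := by
  intro j
  induction j with
  | zero =>
    intro x y z hxy hyz hxz hxzM hxyB hyzB
    apply hxz
    simp only [Bset, Finset.mem_sdiff] at hxyB hyzB ⊢
    have h1 := mem_placesA.1 hxyB.1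
    have h2 := mem_placesA.1 hyzB.1
    exact ⟨mem_placesA.2 ⟨h1.1, by omega, by omega⟩, hxzM⟩
  | succ j ih =>
    intro x y z hxy hyz hxz hxzM hxyB hyzB
    have hxyBj : (x, y) ∈ Bset n M j := Bset_succ_subset _ _ _ hxyB
    have hyzBj : (y, z) ∈ Bset n M j := Bset_succ_subset _ _ _ hyzB
    by_cases hprev : (x, z) ∈ Bset n M j
    · -- `(x,z)` is removed exactly at step `j+1`
      have hξmem : xiOf n (Bset n M j) ∈ Bset n M j :=
        (xiOf_spec (Bset_subset n M j) hprev).1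
      have hξA := mem_placesA.1 (Bset_subset n M j hξmem)
      have hξM : xiOf n (Bset n M j) ∉ M := Bset_notMem n M j hξmem
      have hrem : (x, z) = xiOf n (Bset n M j) ∨
          (x, z) ∈ minusSet n (Bset n M j) ∨ (x, z) ∈ plusSet n (Bset n M j) := by
        by_contra hcon
        push_neg at hcon
        apply hxz
        simp only [Bset, Finset.mem_sdiff, Finset.mem_insert, Finset.mem_union]
        exact ⟨hprev, by tauto⟩
      have hxyNotRem : (x, y) ∉ minusSet n (Bset n M j) := by
        intro hc
        have := hxyB
        simp only [Bset, Finset.mem_sdiff, Finset.mem_insert, Finset.mem_union] at this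
        exact this.2 (Or.inr (Or.inl hc))
      have hyzNotRem : (y, z) ∉ plusSet n (Bset n M j) := by
        intro hc
        have := hyzB
        simp only [Bset, Finset.mem_sdiff, Finset.mem_insert, Finset.mem_union] at this
        exact this.2 (Or.inr (Or.inr hc))
      rcases hrem with h | h | h
      · -- `(x,z)` receives `⊗`; then `(x,y)` would receive `−`, contradiction
        apply hxyNotRem
        simp only [minusSet, Finset.mem_filter, ← h]
        exact ⟨hxyBj, trivial, hyz, hxy, hyzBj⟩
      · -- `(x,z)` receives `−`
        simp only [minusSet, Finset.mem_filter] at h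
        obtain ⟨_, h1, h2, h3, h4⟩ := h
        have hyξ : (y, xiOf n (Bset n M j) |>.2) ∉ Bset n M j := by
          intro hc
          apply hxyNotRem
          simp only [minusSet, Finset.mem_filter]
          exact ⟨hxyBj, h1, by omega, by omega, hc⟩
        have hyξM : (y, xiOf n (Bset n M j) |>.2) ∉ M := by
          intro hc
          apply hξM
          have := hM.2.2 _ hc x hxy (by
            have := mem_placesA.1 (Bset_subset n M j hxyBj); exact this.1)
          have hxieq : xiOf n (Bset n M j) = (x, (xiOf n (Bset n M j)).2) := by
            ext
            · exact h1.symm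
            · rfl
          rw [hxieq]
          exact this
        exact ih y z (xiOf n (Bset n M j)).2 hyz h2 hyξ hyξM hyzBj h4
      · -- `(x,z)` receives `+`
        simp only [plusSet, Finset.mem_filter] at h
        obtain ⟨_, h1, h2, h3, h4⟩ := h
        have hξy : ((xiOf n (Bset n M j)).1, y) ∉ Bset n M j := by
          intro hc
          apply hyzNotRem
          simp only [plusSet, Finset.mem_filter]
          exact ⟨hyzBj, h1, by omega, by omega, hc⟩
        have hξyM : ((xiOf n (Bset n M j)).1, y) ∉ M := by
          intro hc
          apply hξM
          have hz1 : 1 ≤ z := (mem_placesA.1 (Bset_subset n M j hyzBj)).2.1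
          have := hM.2.1 _ hc z hz1 hyz
          have hxieq : xiOf n (Bset n M j) = ((xiOf n (Bset n M j)).1, z) := by
            ext
            · rfl
            · exact h1.symm
          rw [hxieq]
          exact this
        exact ih (xiOf n (Bset n M j)).1 x y h3 hxy hξy hξyM h4 hxyBj
    · exact ih x y z hxy hyz hprev hxzM hxyBj hyzBj

/-- **Case 5 impossibility.**  Writing `ξ_i = (k,t)`, with `p > k` such that the
elements of `M` in column `t` are exactly `{(j,t) : p ≤ j ≤ n}`, there is no
configuration `a > b > c` with `k < a < p`, `(a,b) ∈ B_i^{(2)}` and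
`(b,c) ∈ B_i^{(1.1)}`. -/
theorem case5_impossible (K : Type*) [Field K] [CharZero K]
    (n s : ℕ) (hn : 2 ≤ n) (M : Finset (ℕ × ℕ))
    (hM : IsIdealSet n M) (hs : IsNumSteps n M s)
    (i k t p : ℕ) (hi1 : 1 ≤ i) (his : i ≤ s)
    (hkt : xiStep n M i = (k, t)) (hkp : k < p)
    (hMp : ∀ j, (j, t) ∈ M ↔ p ≤ j ∧ j ≤ n) :
    ¬ ∃ a b c : ℕ, a > b ∧ b > c ∧ k < a ∧ a < p ∧
        (a, b) ∈ Bset n M i ∧ t < b ∧ b < k ∧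
        memB11 n M i k t (b, c) := by
  rintro ⟨a, b, c, hab, hbc, hka, hap, habB, htb, hbk, hB11⟩
  have hne : (Bset n M (i - 1)).Nonempty := hs.2 (i - 1) (by omega)
  obtain ⟨q0, hq0⟩ := hne
  have hspec := xiOf_spec (Bset_subset n M (i - 1)) hq0
  have hxi : xiOf n (Bset n M (i - 1)) = (k, t) := hkt
  have hii : i - 1 + 1 = i := by omega
  have habB' : (a, b) ∈ Bset n M (i - 1) := by
    rw [← hii] at habB
    exact Bset_succ_subset _ _ _ habB
  have haA := mem_placesA.1 (Bset_subset n M (i - 1) habB')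
  have hat : (a, t) ∉ Bset n M (i - 1) := by
    intro hmem
    have h1 := hspec.2 _ hmem
    rw [hxi] at h1
    unfold ordA at h1
    simp only at h1
    omega
  have hatM : (a, t) ∉ M := fun h => by have := (hMp a).1 h; omega
  have hbt : (b, t) ∈ Bset n M (i - 1) := hB11.2.2.2.2.2.1
  exact no_triangle n M hM (i - 1) a b t (by omega) (by omega) hat hatM habB' hbt

end Panov
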